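/- In the static logit panel model, the likelihood ratio of two outcomes with the same sufficient statistic is free of the fixed effect: if ȳ = (ȳ₀, ȳ₁) and ỹ = (ỹ₀, ỹ₁) satisfy 0 ≤ ȳ₀, ỹ₀ ≤ T₀, 0 ≤ ȳ₁, ỹ₁ ≤ T₁, and ȳ₀ + ȳ₁ = ỹ₀ + ỹ₁, then for all α, θ ∈ ℝ, f(ȳ | α, θ) · C(T₀, ỹ₀) · C(T₁, ỹ₁) = f(ỹ | α, θ) · C(T₀, ȳ₀) · C(T₁, ȳ₁) · exp(((ȳ₁ : ℝ) − ỹ₁) · θ). -/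

import Mathlib

/-- The standardized logistic cdf. -/
noncomputable def logisticCdf (u : ℝ) : ℝ := 1 / (1 + Real.exp (-u))

/-- The static logit panel model likelihood of the outcome `y = (y₀, y₁)`
given fixed effect `α` and common parameter `θ`. -/
noncomputable def logitLik (T0 T1 : ℕ) (y : ℕ × ℕ) (α θ : ℝ) : ℝ :=
  (T0.choose y.1 : ℝ) * (1 - logisticCdf α) ^ (T0 - y.1) * logisticCdf α ^ y.1 *
  (T1.choose y.2 : ℝ) * (1 - logisticCdf (θ + α)) ^ (T1 - y.2) *
    logisticCdf (θ + α) ^ y.2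

lemma one_sub_logisticCdf (u : ℝ) :
    1 - logisticCdf u = Real.exp (-u) * logisticCdf u := by
  have h : (0:ℝ) < 1 + Real.exp (-u) := by positivity
  unfold logisticCdf
  field_simp
  ring

lemma logitLik_eq (T0 T1 : ℕ) (y : ℕ × ℕ) (α θ : ℝ)
    (h0 : y.1 ≤ T0) (h1 : y.2 ≤ T1) :
    logitLik T0 T1 y α θ =
      (T0.choose y.1 : ℝ) * (T1.choose y.2 : ℝ) *
        Real.exp (-(α * ((T0:ℝ) - y.1)) - (θ + α) * ((T1:ℝ) - y.2)) *
        logisticCdf α ^ T0 * logisticCdf (θ + α) ^ T1 := by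
  unfold logitLik
  rw [one_sub_logisticCdf, one_sub_logisticCdf, mul_pow, mul_pow,
    ← Real.exp_nat_mul, ← Real.exp_nat_mul]
  rw [Nat.cast_sub h0, Nat.cast_sub h1]
  have e0 : logisticCdf α ^ (T0 - y.1) * logisticCdf α ^ y.1 = logisticCdf α ^ T0 := by
    rw [← pow_add, Nat.sub_add_cancel h0]
  have e1 : logisticCdf (θ + α) ^ (T1 - y.2) * logisticCdf (θ + α) ^ y.2
      = logisticCdf (θ + α) ^ T1 := by
    rw [← pow_add, Nat.sub_add_cancel h1]
  calc (T0.choose y.1 : ℝ) *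
        (Real.exp (((T0:ℝ) - y.1) * -α) * logisticCdf α ^ (T0 - y.1)) *
        logisticCdf α ^ y.1 * (T1.choose y.2 : ℝ) *
        (Real.exp (((T1:ℝ) - y.2) * -(θ + α)) * logisticCdf (θ + α) ^ (T1 - y.2)) *
        logisticCdf (θ + α) ^ y.2
      = (T0.choose y.1 : ℝ) * (T1.choose y.2 : ℝ) *
        (Real.exp (((T0:ℝ) - y.1) * -α) * Real.exp (((T1:ℝ) - y.2) * -(θ + α))) *
        (logisticCdf α ^ (T0 - y.1) * logisticCdf α ^ y.1) *
        (logisticCdf (θ + α) ^ (T1 - y.2) * logisticCdf (θ + α) ^ y.2) := by ring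
    _ = _ := by rw [e0, e1, ← Real.exp_add]; ring_nf

/-- In the static logit panel model, the likelihood ratio of two outcomes with
the same sufficient statistic is free of the fixed effect. -/
theorem stmt_15 (T0 T1 : ℕ) (hT0 : 0 < T0) (hT1 : 0 < T1)
    (yb yt : ℕ × ℕ)
    (hyb0 : yb.1 ≤ T0) (hyb1 : yb.2 ≤ T1)
    (hyt0 : yt.1 ≤ T0) (hyt1 : yt.2 ≤ T1)
    (hstat : yb.1 + yb.2 = yt.1 + yt.2) :
    ∀ α θ : ℝ,
      logitLik T0 T1 yb α θ * (T0.choose yt.1 : ℝ) * (T1.choose yt.2 : ℝ) =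
        logitLik T0 T1 yt α θ * (T0.choose yb.1 : ℝ) * (T1.choose yb.2 : ℝ) *
          Real.exp (((yb.2 : ℝ) - (yt.2 : ℝ)) * θ) := by
  intro α θ
  rw [logitLik_eq T0 T1 yb α θ hyb0 hyb1, logitLik_eq T0 T1 yt α θ hyt0 hyt1]
  have hcast : (yb.1 : ℝ) + yb.2 = (yt.1 : ℝ) + yt.2 := by
    exact_mod_cast congrArg (Nat.cast : ℕ → ℝ) hstat
  have hexp : Real.exp (-(α * ((T0:ℝ) - yb.1)) - (θ + α) * ((T1:ℝ) - yb.2)) =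
      Real.exp (-(α * ((T0:ℝ) - yt.1)) - (θ + α) * ((T1:ℝ) - yt.2)) *
        Real.exp (((yb.2 : ℝ) - (yt.2 : ℝ)) * θ) := by
    rw [← Real.exp_add]
    congr 1
    linear_combination α * hcast
  rw [hexp]; ring
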